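/- arXiv:1806.05253 — 7 statements merged into one kernel-verified Lean document; each statement's English description precedes it below -/
import Mathlib

section
/- Let K ⊆ ℝ^d be a closed cone and A a linear map with AK ⊆ K. If (I + A)^{d−1} maps K∖{0} into the interior of K, then ∑_{k=0}^{d−1} A^k also maps K∖{0} into the interior of K. -/
open scoped Pointwise

theorem irreducible_sum_powers_positive (d : ℕ) (K : Set (EuclideanSpace ℝ (Fin d)))
    (hclosed : IsClosed K)
    (hpointed : K ∩ (-K) = {0})
    (hsmul : ∀ l : ℝ, 0 < l → l • K = K)
    (hconv : Convex ℝ K)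
    (A : EuclideanSpace ℝ (Fin d) →ₗ[ℝ] EuclideanSpace ℝ (Fin d))
    (hA : ∀ x ∈ K, A x ∈ K)
    (hpos : ∀ x ∈ K, x ≠ 0 → ((1 + A) ^ (d - 1)) x ∈ interior K) :
    ∀ x ∈ K, x ≠ 0 → (∑ k ∈ Finset.range d, A ^ k) x ∈ interior K := by
  intro x hx hx0
  rcases Nat.eq_zero_or_pos d with hd | hd
  · exfalso; subst hd; exact hx0 (Subsingleton.elim x 0)
  obtain ⟨n, rfl⟩ : ∃ n, d = n + 1 := ⟨d - 1, (Nat.succ_pred_eq_of_pos hd).symm⟩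
  have h0K : (0 : EuclideanSpace ℝ (Fin (n+1))) ∈ K := by
    have : (0 : EuclideanSpace ℝ (Fin (n+1))) ∈ K ∩ (-K) := by
      rw [hpointed]; rfl
    exact this.1
  -- nonnegative scaling
  have hsmul' : ∀ (l : ℝ), 0 ≤ l → ∀ y ∈ K, l • y ∈ K := by
    intro l hl y hy
    rcases hl.eq_or_lt with h | h
    · rw [← h, zero_smul]; exact h0K
    · have := Set.smul_mem_smul_set (a := l) hy
      rwa [hsmul l h] at this
  -- additivity
  have hadd : ∀ y ∈ K, ∀ z ∈ K, y + z ∈ K := by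
    intro y hy z hz
    have hm : (1/2 : ℝ) • y + (1/2 : ℝ) • z ∈ K :=
      hconv hy hz (by norm_num) (by norm_num) (by norm_num)
    have := hsmul' 2 (by norm_num) _ hm
    rwa [smul_add, smul_smul, smul_smul, show (2:ℝ) * (1/2) = 1 by norm_num, one_smul, one_smul] at this
  -- powers preserve K
  have hApow : ∀ k, ∀ y ∈ K, (A ^ k) y ∈ K := by
    intro k
    induction k with
    | zero => intro y hy; simpa using hy
    | succ m ih =>
      intro y hy
      rw [pow_succ, Module.End.mul_apply]
      exact ih _ (hA y hy)
  -- interior is stable under positive scaling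
  have hint_smul : ∀ (l : ℝ), 0 < l → ∀ y ∈ interior K, l • y ∈ interior K := by
    intro l hl y hy
    have h1 : l • y ∈ l • interior K := Set.smul_mem_smul_set hy
    rwa [← interior_smul₀ hl.ne' K, hsmul l hl] at h1
  -- interior + K ⊆ interior
  have hint_add : ∀ u ∈ interior K, ∀ v ∈ K, u + v ∈ interior K := by
    intro u hu v hv
    have hop : IsOpen ((fun w => w + v) '' interior K) :=
      (isOpenMap_add_right v) _ isOpen_interior
    have hsub : ((fun w => w + v) '' interior K) ⊆ K := by
      rintro _ ⟨w, hw, rfl⟩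
      exact hadd w (interior_subset hw) v hv
    exact interior_maximal hsub hop ⟨u, hu, rfl⟩
  -- expansion of (1+A)^n applied to x
  have hexp : ((1 + A) ^ n) x
      = ∑ k ∈ Finset.range (n+1), ((n.choose k : ℝ)) • ((A ^ k) x) := by
    rw [show (1 + A) = A + 1 from add_comm 1 A, Commute.add_pow (Commute.one_right A) n]
    rw [LinearMap.sum_apply]
    refine Finset.sum_congr rfl fun k hk => ?_
    simp [Module.End.mul_apply, mul_comm, Nat.cast_smul_eq_nsmul]
  set ε : ℝ := (1/2 : ℝ) ^ n with hε
  have hεpos : 0 < ε := by positivity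
  have hCle : ∀ k ∈ Finset.range (n+1), (n.choose k : ℝ) ≤ 2 ^ n := by
    intro k hk
    have : n.choose k ≤ 2 ^ n := by
      calc n.choose k ≤ ∑ m ∈ Finset.range (n+1), n.choose m :=
            Finset.single_le_sum (fun i _ => Nat.zero_le _) hk
        _ = 2 ^ n := Nat.sum_range_choose n
    exact_mod_cast this
  have hcoef : ∀ k ∈ Finset.range (n+1), 0 ≤ 1 - ε * (n.choose k : ℝ) := by
    intro k hk
    have := hCle k hk
    have h2 : ε * (n.choose k : ℝ) ≤ ε * 2 ^ n := by
      exact mul_le_mul_of_nonneg_left this hεpos.le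
    have h3 : ε * (2:ℝ) ^ n = 1 := by
      rw [hε, ← mul_pow]; norm_num
    linarith
  -- the key identity
  have hident : (∑ k ∈ Finset.range (n+1), A ^ k) x
      = ε • (((1 + A) ^ n) x)
        + ∑ k ∈ Finset.range (n+1), (1 - ε * (n.choose k : ℝ)) • ((A ^ k) x) := by
    rw [hexp, Finset.smul_sum, ← Finset.sum_add_distrib, LinearMap.sum_apply]
    refine Finset.sum_congr rfl fun k hk => ?_
    rw [smul_smul, ← add_smul]
    ring_nf
    rw [one_smul]
  rw [hident]
  have hB : ((1 + A) ^ n) x ∈ interior K := by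
    have := hpos x hx hx0
    simpa using this
  refine hint_add _ (hint_smul ε hεpos _ hB) _ ?_
  refine Finset.sum_induction _ (· ∈ K) (fun a b ha hb => hadd a ha b hb) h0K ?_
  intro k hk
  exact hsmul' _ (hcoef k hk) _ (hApow k x hx)
end

section
/- Let K ⊆ ℝ^d be a closed cone with nonempty interior, and let D ⊂ int(K) and D* ⊂ int(K*) be nonempty compact sets. Then there exists C > 0 such that C^{-1}‖A‖ ≤ ⟨Au, v⟩ ≤ C‖A‖ for all u ∈ D, v ∈ D*, and all linear maps A with AK ⊆ K. -/
open scoped RealInnerProductSpace Pointwise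

theorem approx_norm_lemma (d : ℕ) (K : Set (EuclideanSpace ℝ (Fin d)))
    (hclosed : IsClosed K)
    (hpointed : K ∩ (-K) = {0})
    (hsmul : ∀ l : ℝ, 0 < l → l • K = K)
    (hconv : Convex ℝ K)
    (hint : (interior K).Nonempty)
    (D Dstar : Set (EuclideanSpace ℝ (Fin d)))
    (hD : D ⊆ interior K)
    (hDstar : Dstar ⊆ interior {w | ∀ x ∈ K, 0 ≤ ⟪x, w⟫})
    (hDne : D.Nonempty) (hDstarne : Dstar.Nonempty)
    (hDcpt : IsCompact D) (hDstarcpt : IsCompact Dstar) :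
    ∃ C > (0 : ℝ), ∀ u ∈ D, ∀ v ∈ Dstar,
      ∀ A : EuclideanSpace ℝ (Fin d) →L[ℝ] EuclideanSpace ℝ (Fin d),
        (∀ x ∈ K, A x ∈ K) →
          C⁻¹ * ‖A‖ ≤ ⟪A u, v⟫ ∧ ⟪A u, v⟫ ≤ C * ‖A‖ := by
  classical
  obtain ⟨r, hr, hrsub⟩ := hDcpt.exists_thickening_subset_open isOpen_interior hD
  obtain ⟨δ, hδ, hδsub⟩ := hDstarcpt.exists_thickening_subset_open isOpen_interior hDstar
  obtain ⟨M, hM⟩ := hDcpt.isBounded.exists_norm_le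
  obtain ⟨N, hN⟩ := hDstarcpt.isBounded.exists_norm_le
  set r' : ℝ := r / 2 with hr'def
  set δ' : ℝ := δ / 2 with hδ'def
  have hr' : 0 < r' := by positivity
  have hδ' : 0 < δ' := by positivity
  -- Fact 1: for v ∈ Dstar and y ∈ K, δ' ‖y‖ ≤ ⟪y, v⟫
  have fact1 : ∀ v ∈ Dstar, ∀ y ∈ K, δ' * ‖y‖ ≤ ⟪y, v⟫ := by
    intro v hv y hy
    rcases eq_or_ne y 0 with rfl | hy0
    · simp
    have hyn : (0 : ℝ) < ‖y‖ := norm_pos_iff.mpr hy0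
    have hball : v - (δ' / ‖y‖) • y ∈ Metric.ball v δ := by
      rw [Metric.mem_ball, dist_eq_norm]
      have h0 : v - (δ' / ‖y‖) • y - v = -((δ' / ‖y‖) • y) := by abel
      rw [h0, norm_neg, norm_smul, Real.norm_eq_abs, abs_of_pos (by positivity : (0:ℝ) < δ' / ‖y‖)]
      have : δ' / ‖y‖ * ‖y‖ = δ' := by field_simp
      rw [this]; linarith
    have hmem : v - (δ' / ‖y‖) • y ∈ {w | ∀ x ∈ K, 0 ≤ ⟪x, w⟫} :=
      interior_subset (hδsub (Metric.ball_subset_thickening hv δ hball))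
    have h0 := hmem y hy
    rw [inner_sub_right, real_inner_smul_right, real_inner_self_eq_norm_mul_norm] at h0
    have heq : δ' / ‖y‖ * (‖y‖ * ‖y‖) = δ' * ‖y‖ := by field_simp
    rw [heq] at h0
    linarith
  -- Fact 2: for u ∈ D and ‖x‖ ≤ 1, u ± r' x ∈ K
  have fact2 : ∀ u ∈ D, ∀ x : EuclideanSpace ℝ (Fin d), ‖x‖ ≤ 1 →
      u + r' • x ∈ K ∧ u - r' • x ∈ K := by
    intro u hu x hx
    have key : ∀ c : ℝ, |c| ≤ r' → u + c • x ∈ K := by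
      intro c hc
      have : u + c • x ∈ Metric.ball u r := by
        rw [Metric.mem_ball, dist_eq_norm]
        have : u + c • x - u = c • x := by abel
        rw [this, norm_smul, Real.norm_eq_abs]
        have h1 : |c| * ‖x‖ ≤ r' * 1 := by
          apply mul_le_mul hc hx (norm_nonneg x) (le_of_lt hr')
        have : r' * 1 < r := by rw [hr'def]; linarith
        linarith
      exact interior_subset (hrsub (Metric.ball_subset_thickening hu r this))
    constructor
    · exact key r' (by rw [abs_of_pos hr'])
    · have := key (-r') (by rw [abs_neg, abs_of_pos hr'])
      rwa [neg_smul, ← sub_eq_add_neg] at this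
  -- bounds M N ≥ 0
  obtain ⟨u₀, hu₀⟩ := hDne
  obtain ⟨v₀, hv₀⟩ := hDstarne
  have hM0 : 0 ≤ M := le_trans (norm_nonneg u₀) (hM u₀ hu₀)
  have hN0 : 0 ≤ N := le_trans (norm_nonneg v₀) (hN v₀ hv₀)
  refine ⟨max (M * N) (1 / (r' * δ')) + 1, by positivity, ?_⟩
  set C : ℝ := max (M * N) (1 / (r' * δ')) + 1 with hCdef
  have hC0 : 0 < C := by positivity
  intro u hu v hv A hA
  have huK : u ∈ K := interior_subset (hD hu)
  have hAuK : A u ∈ K := hA u huK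
  have hlow : δ' * ‖A u‖ ≤ ⟪A u, v⟫ := fact1 v hv (A u) hAuK
  have hinner0 : 0 ≤ ⟪A u, v⟫ := le_trans (by positivity) hlow
  -- Key: ‖A‖ ≤ (r' δ')⁻¹ ⟪A u, v⟫
  have hopnorm : ‖A‖ ≤ (r' * δ')⁻¹ * ⟪A u, v⟫ := by
    apply ContinuousLinearMap.opNorm_le_bound _ (by positivity)
    intro x
    rcases eq_or_ne x 0 with rfl | hx0
    · simp
    have hxn : (0 : ℝ) < ‖x‖ := norm_pos_iff.mpr hx0
    set e : EuclideanSpace ℝ (Fin d) := ‖x‖⁻¹ • x with hedef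
    have he1 : ‖e‖ ≤ 1 := by
      rw [hedef, norm_smul, Real.norm_eq_abs, abs_of_pos (by positivity : (0:ℝ) < ‖x‖⁻¹),
        inv_mul_cancel₀ hxn.ne']
    obtain ⟨hp, hm⟩ := fact2 u hu e he1
    have h1 : δ' * ‖A (u + r' • e)‖ ≤ ⟪A (u + r' • e), v⟫ :=
      fact1 v hv _ (hA _ hp)
    have h2 : δ' * ‖A (u - r' • e)‖ ≤ ⟪A (u - r' • e), v⟫ :=
      fact1 v hv _ (hA _ hm)
    have hsum : ⟪A (u + r' • e), v⟫ + ⟪A (u - r' • e), v⟫ = 2 * ⟪A u, v⟫ := by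
      rw [map_add, map_sub, inner_add_left, inner_sub_left]
      ring
    have hdiff : A (u + r' • e) - A (u - r' • e) = (2 * r') • A e := by
      rw [map_add, map_sub, map_smul]
      module
    have hnorm2 : 2 * r' * ‖A e‖ ≤ ‖A (u + r' • e)‖ + ‖A (u - r' • e)‖ := by
      have := norm_sub_le (A (u + r' • e)) (A (u - r' • e))
      rw [hdiff, norm_smul, Real.norm_eq_abs,
        abs_of_pos (by positivity : (0:ℝ) < 2 * r')] at this
      linarith
    have hAe : ‖A e‖ ≤ (r' * δ')⁻¹ * ⟪A u, v⟫ := by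
      have h3 : δ' * (2 * r' * ‖A e‖) ≤ 2 * ⟪A u, v⟫ := by
        calc δ' * (2 * r' * ‖A e‖)
            ≤ δ' * (‖A (u + r' • e)‖ + ‖A (u - r' • e)‖) := by
              apply mul_le_mul_of_nonneg_left hnorm2 (le_of_lt hδ')
          _ = δ' * ‖A (u + r' • e)‖ + δ' * ‖A (u - r' • e)‖ := by ring
          _ ≤ ⟪A (u + r' • e), v⟫ + ⟪A (u - r' • e), v⟫ := add_le_add h1 h2
          _ = 2 * ⟪A u, v⟫ := hsum
      rw [inv_mul_eq_div, le_div_iff₀ (by positivity : (0:ℝ) < r' * δ')]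
      nlinarith [h3]
    have hAx : A x = ‖x‖ • A e := by
      rw [hedef, map_smul, smul_smul, mul_inv_cancel₀ hxn.ne', one_smul]
    rw [hAx, norm_smul, Real.norm_eq_abs, abs_of_pos hxn]
    calc ‖x‖ * ‖A e‖ ≤ ‖x‖ * ((r' * δ')⁻¹ * ⟪A u, v⟫) :=
          mul_le_mul_of_nonneg_left hAe (le_of_lt hxn)
      _ = (r' * δ')⁻¹ * ⟪A u, v⟫ * ‖x‖ := by ring
  constructor
  · -- lower bound
    have hCge : 1 / (r' * δ') ≤ C := by
      have h := le_max_right (M * N) (1 / (r' * δ')); rw [hCdef]; linarith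
    have hCinv : C⁻¹ ≤ r' * δ' := by
      rw [inv_le_comm₀ hC0 (by positivity)]
      rwa [one_div] at hCge
    calc C⁻¹ * ‖A‖ ≤ (r' * δ') * ‖A‖ :=
          mul_le_mul_of_nonneg_right hCinv (norm_nonneg A)
      _ ≤ (r' * δ') * ((r' * δ')⁻¹ * ⟪A u, v⟫) :=
          mul_le_mul_of_nonneg_left hopnorm (by positivity)
      _ = ⟪A u, v⟫ := by field_simp
  · -- upper bound
    have h1 : ⟪A u, v⟫ ≤ ‖A u‖ * ‖v‖ := real_inner_le_norm _ _
    have h2 : ‖A u‖ ≤ ‖A‖ * ‖u‖ := A.le_opNorm u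
    have hMN : M * N ≤ C := by
      have h := le_max_left (M * N) (1 / (r' * δ')); rw [hCdef]; linarith
    have hu' := hM u hu
    have hv' := hN v hv
    have hAn : 0 ≤ ‖A‖ := norm_nonneg A
    calc ⟪A u, v⟫ ≤ ‖A u‖ * ‖v‖ := h1
      _ ≤ (‖A‖ * ‖u‖) * ‖v‖ := by
          apply mul_le_mul_of_nonneg_right h2 (norm_nonneg v)
      _ ≤ (‖A‖ * M) * N := by
          apply mul_le_mul (mul_le_mul_of_nonneg_left hu' hAn) hv' (norm_nonneg v)
          positivity
      _ = (M * N) * ‖A‖ := by ring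
      _ ≤ C * ‖A‖ := mul_le_mul_of_nonneg_right hMN hAn
end

section
/- Let A be a K-nonnegative linear map on ℝ^d for a closed cone K with nonempty interior. If ⟨Au, v⟩ = 0 for some u ∈ int(K) and v ∈ int(K*), then A = 0. -/
open scoped RealInnerProductSpace Pointwise

theorem inner_eq_zero_interior_imp_zero (d : ℕ) (K : Set (EuclideanSpace ℝ (Fin d)))
    (hclosed : IsClosed K)
    (hpointed : K ∩ (-K) = {0})
    (hsmul : ∀ l : ℝ, 0 < l → l • K = K)
    (hconv : Convex ℝ K)
    (hint : (interior K).Nonempty)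
    (A : EuclideanSpace ℝ (Fin d) →L[ℝ] EuclideanSpace ℝ (Fin d))
    (hA : ∀ x ∈ K, A x ∈ K)
    (u v : EuclideanSpace ℝ (Fin d))
    (hu : u ∈ interior K)
    (hv : v ∈ interior {w | ∀ x ∈ K, 0 ≤ ⟪x, w⟫})
    (h0 : ⟪A u, v⟫ = 0) :
    A = 0 := by
  have huK : u ∈ K := interior_subset hu
  have hAuK : A u ∈ K := hA u huK
  -- Step 1: A u = 0
  have hAu0 : A u = 0 := by
    by_contra hne
    have hn : 0 < ‖A u‖ := norm_pos_iff.mpr hne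
    obtain ⟨ε, hε, hball⟩ := Metric.isOpen_iff.mp isOpen_interior v hv
    set c : ℝ := ε / (2 * ‖A u‖) with hc
    have hcpos : 0 < c := div_pos hε (by positivity)
    have hwmem : v - c • A u ∈ {w | ∀ x ∈ K, 0 ≤ ⟪x, w⟫} := by
      apply interior_subset
      apply hball
      simp only [Metric.mem_ball, dist_eq_norm]
      have : v - c • A u - v = -(c • A u) := by abel
      rw [this, norm_neg, norm_smul, Real.norm_eq_abs, abs_of_pos hcpos, hc]
      rw [div_mul_eq_mul_div, div_lt_iff₀ (by positivity)]
      nlinarith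
    have := hwmem (A u) hAuK
    rw [inner_sub_right, real_inner_smul_right, h0, real_inner_self_eq_norm_sq] at this
    nlinarith [mul_pos hcpos (pow_pos hn 2)]
  -- Step 2: A y = 0 for all y
  ext y
  obtain ⟨ε, hε, hball⟩ := Metric.isOpen_iff.mp isOpen_interior u hu
  set t : ℝ := ε / (2 * (‖y‖ + 1)) with ht
  have htpos : 0 < t := div_pos hε (by positivity)
  have hnorm : ‖t • y‖ < ε := by
    rw [norm_smul, Real.norm_eq_abs, abs_of_pos htpos, ht]
    rw [div_mul_eq_mul_div, div_lt_iff₀ (by positivity)]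
    nlinarith [norm_nonneg y]
  have hmem : ∀ s : EuclideanSpace ℝ (Fin d), ‖s‖ < ε → u + s ∈ K := by
    intro s hs
    apply interior_subset
    apply hball
    simp only [Metric.mem_ball, dist_eq_norm]
    simpa using hs
  have h1 : t • A y ∈ K := by
    have := hA _ (hmem (t • y) hnorm)
    simpa [map_add, map_smul, hAu0] using this
  have h2 : t • (-(A y)) ∈ K := by
    have hn2 : ‖-(t • y)‖ < ε := by simpa using hnorm
    have := hA _ (hmem (-(t • y)) hn2)
    simpa [map_add, map_smul, hAu0, smul_neg] using this
  have hAyK : A y ∈ K := by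
    rw [← hsmul (1/t) (by positivity)]
    refine ⟨t • A y, h1, ?_⟩
    show (1/t) • t • A y = A y
    rw [smul_smul]
    field_simp
    rw [one_smul]
  have hAynK : -(A y) ∈ K := by
    rw [← hsmul (1/t) (by positivity)]
    refine ⟨t • (-(A y)), h2, ?_⟩
    show (1/t) • t • (-(A y)) = -(A y)
    rw [smul_smul]
    field_simp
    rw [one_smul]
  have : A y ∈ K ∩ (-K) := ⟨hAyK, by simpa using hAynK⟩
  rw [hpointed, Set.mem_singleton_iff] at this
  simp [this]
end

section
/- For any invertible d×d real matrix A and nonzero vectors u, w ∈ ℝ^d, the projective distance satisfies d(Āu, Āw) ≤ (2‖A‖ / ‖A(u/‖u‖)‖) · d(ū, w̄), where d(ū, w̄) = min(‖u/‖u‖ − w/‖w‖‖, ‖u/‖u‖ + w/‖w‖‖) is the metric on real projective space. -/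
/-- The metric on real projective space, expressed on nonzero representatives. -/
noncomputable def projDist {d : ℕ} (u w : EuclideanSpace ℝ (Fin d)) : ℝ :=
  min ‖‖u‖⁻¹ • u - ‖w‖⁻¹ • w‖ ‖‖u‖⁻¹ • u + ‖w‖⁻¹ • w‖

private lemma key_norm_lemma {E : Type*} [NormedAddCommGroup E] [NormedSpace ℝ E]
    (x y : E) (hx : x ≠ 0) (hy : y ≠ 0) :
    ‖x‖ * ‖‖x‖⁻¹ • x - ‖y‖⁻¹ • y‖ ≤ 2 * ‖x - y‖ := by
  have hx' : (0:ℝ) < ‖x‖ := norm_pos_iff.mpr hx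
  have hy' : (0:ℝ) < ‖y‖ := norm_pos_iff.mpr hy
  have h1 : ‖x‖ • (‖x‖⁻¹ • x - ‖y‖⁻¹ • y) = x - (‖x‖ * ‖y‖⁻¹) • y := by
    rw [smul_sub, smul_smul, smul_smul, mul_inv_cancel₀ hx'.ne', one_smul]
  have h2 : ‖x‖ * ‖‖x‖⁻¹ • x - ‖y‖⁻¹ • y‖ = ‖x - (‖x‖ * ‖y‖⁻¹) • y‖ := by
    rw [← h1, norm_smul, Real.norm_of_nonneg hx'.le]
  rw [h2]
  have h3 : ‖y - (‖x‖ * ‖y‖⁻¹) • y‖ = |‖y‖ - ‖x‖| := by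
    have : y - (‖x‖ * ‖y‖⁻¹) • y = (1 - ‖x‖ * ‖y‖⁻¹) • y := by
      rw [sub_smul, one_smul]
    rw [this, norm_smul, Real.norm_eq_abs]
    rw [show (1 - ‖x‖ * ‖y‖⁻¹) = (‖y‖ - ‖x‖) * ‖y‖⁻¹ by field_simp]
    rw [abs_mul, abs_inv, abs_norm, mul_assoc, inv_mul_cancel₀ hy'.ne', mul_one]
  calc ‖x - (‖x‖ * ‖y‖⁻¹) • y‖
      ≤ ‖x - y‖ + ‖y - (‖x‖ * ‖y‖⁻¹) • y‖ := by
        have := norm_sub_le (x - y) ((‖x‖ * ‖y‖⁻¹) • y - y)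
        simpa [sub_sub_sub_cancel_right, norm_sub_rev] using
          norm_sub_le_norm_sub_add_norm_sub x y ((‖x‖ * ‖y‖⁻¹) • y)
    _ ≤ ‖x - y‖ + ‖x - y‖ := by
        rw [h3]
        have : |‖y‖ - ‖x‖| ≤ ‖y - x‖ := abs_norm_sub_norm_le y x
        rw [norm_sub_rev] at this
        linarith
    _ = 2 * ‖x - y‖ := by ring

theorem projective_contraction (d : ℕ)
    (A : EuclideanSpace ℝ (Fin d) →L[ℝ] EuclideanSpace ℝ (Fin d))
    (hA : Function.Bijective A)
    (u w : EuclideanSpace ℝ (Fin d)) (hu : u ≠ 0) (hw : w ≠ 0) :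
    projDist (A u) (A w) ≤ (2 * ‖A‖ / ‖A (‖u‖⁻¹ • u)‖) * projDist u w := by
  have hu' : (0:ℝ) < ‖u‖ := norm_pos_iff.mpr hu
  have hw' : (0:ℝ) < ‖w‖ := norm_pos_iff.mpr hw
  set uh : EuclideanSpace ℝ (Fin d) := ‖u‖⁻¹ • u with huh
  set wh : EuclideanSpace ℝ (Fin d) := ‖w‖⁻¹ • w with hwh
  have huh0 : uh ≠ 0 := smul_ne_zero (inv_ne_zero hu'.ne') hu
  have hwh0 : wh ≠ 0 := smul_ne_zero (inv_ne_zero hw'.ne') hw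
  set x := A uh with hx
  set y := A wh with hy
  have hx0 : x ≠ 0 := fun h => huh0 (hA.injective (by simpa using h))
  have hy0 : y ≠ 0 := fun h => hwh0 (hA.injective (by simpa using h))
  have hx' : (0:ℝ) < ‖x‖ := norm_pos_iff.mpr hx0
  -- normalized images coincide
  have hAu : A u = ‖u‖ • x := by
    rw [hx, huh, ← map_smul, smul_smul, mul_inv_cancel₀ hu'.ne', one_smul]
  have hAw : A w = ‖w‖ • y := by
    rw [hy, hwh, ← map_smul, smul_smul, mul_inv_cancel₀ hw'.ne', one_smul]
  have hnx : ‖A u‖⁻¹ • A u = ‖x‖⁻¹ • x := by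
    rw [hAu, norm_smul, Real.norm_of_nonneg hu'.le, smul_smul]
    congr 1
    field_simp
  have hny : ‖A w‖⁻¹ • A w = ‖y‖⁻¹ • y := by
    rw [hAw, norm_smul, Real.norm_of_nonneg hw'.le, smul_smul]
    congr 1
    field_simp
  have hPD : projDist (A u) (A w) = min ‖‖x‖⁻¹ • x - ‖y‖⁻¹ • y‖ ‖‖x‖⁻¹ • x + ‖y‖⁻¹ • y‖ := by
    rw [projDist, hnx, hny]
  -- bound the minus term
  have hb1 : ‖‖x‖⁻¹ • x - ‖y‖⁻¹ • y‖ ≤ (2 * ‖A‖ / ‖x‖) * ‖uh - wh‖ := by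
    have h := key_norm_lemma x y hx0 hy0
    have hxy : x - y = A (uh - wh) := by rw [map_sub]
    have hop : ‖x - y‖ ≤ ‖A‖ * ‖uh - wh‖ := by rw [hxy]; exact A.le_opNorm _
    rw [div_mul_eq_mul_div, le_div_iff₀ hx']
    nlinarith [norm_nonneg (‖x‖⁻¹ • x - ‖y‖⁻¹ • y)]
  -- bound the plus term
  have hb2 : ‖‖x‖⁻¹ • x + ‖y‖⁻¹ • y‖ ≤ (2 * ‖A‖ / ‖x‖) * ‖uh + wh‖ := by
    have hy0' : (-y) ≠ 0 := neg_ne_zero.mpr hy0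
    have h := key_norm_lemma x (-y) hx0 hy0'
    have hneg : ‖(-y)‖⁻¹ • (-y) = -(‖y‖⁻¹ • y) := by rw [norm_neg, smul_neg]
    rw [hneg, sub_neg_eq_add] at h
    have hxy : x - (-y) = A (uh + wh) := by rw [sub_neg_eq_add, map_add]
    have hop : ‖x - (-y)‖ ≤ ‖A‖ * ‖uh + wh‖ := by rw [hxy]; exact A.le_opNorm _
    rw [div_mul_eq_mul_div, le_div_iff₀ hx']
    nlinarith [norm_nonneg (‖x‖⁻¹ • x + ‖y‖⁻¹ • y)]
  have hc : (0:ℝ) ≤ 2 * ‖A‖ / ‖x‖ := by positivity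
  have : projDist u w = min ‖uh - wh‖ ‖uh + wh‖ := rfl
  rw [hPD, this, mul_min_of_nonneg _ _ hc]
  exact min_le_min hb1 hb2
end

section
/- Let A be an invertible d×d real matrix and t ≥ 0. Then for all nonzero u, w ∈ ℝ^d: |‖A(u/‖u‖)‖^t − ‖A(w/‖w‖)‖^t| ≤ (t+1)‖A‖^t · d(ū, w̄)^{min(1,t)}, where d is the projective metric. -/
lemma real_rpow_add_le_add_rpow (a b : ℝ) {p : ℝ} (ha : 0 ≤ a) (hb : 0 ≤ b)
    (hp : 0 ≤ p) (hp1 : p ≤ 1) : (a + b) ^ p ≤ a ^ p + b ^ p := by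
  lift a to NNReal using ha
  lift b to NNReal using hb
  have := NNReal.rpow_add_le_add_rpow a b hp hp1
  exact_mod_cast this

lemma abs_rpow_sub_rpow_le (a b : ℝ) {p : ℝ} (ha : 0 ≤ a) (hb : 0 ≤ b)
    (hp : 0 ≤ p) (hp1 : p ≤ 1) : |a ^ p - b ^ p| ≤ |a - b| ^ p := by
  wlog hab : b ≤ a generalizing a b
  · rw [abs_sub_comm, abs_sub_comm a b]
    exact this b a hb ha (le_of_not_ge hab)
  have h1 : a ^ p - b ^ p ≤ (a - b) ^ p := by
    have := real_rpow_add_le_add_rpow (a - b) b (by linarith) hb hp hp1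
    rw [sub_add_cancel] at this
    linarith
  have h2 : 0 ≤ a ^ p - b ^ p := by
    have := Real.rpow_le_rpow hb hab hp
    linarith
  rw [abs_of_nonneg h2, abs_of_nonneg (by linarith : (0:ℝ) ≤ a - b)]
  exact h1

lemma rpow_lipschitz {M t : ℝ} (hM : 0 ≤ M) (ht : 1 ≤ t) {a b : ℝ}
    (ha : a ∈ Set.Icc 0 M) (hb : b ∈ Set.Icc 0 M) :
    |a ^ t - b ^ t| ≤ t * M ^ (t - 1) * |a - b| := by
  have := Convex.norm_image_sub_le_of_norm_hasDerivWithin_le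
    (f := fun x : ℝ => x ^ t) (f' := fun x : ℝ => t * x ^ (t - 1)) (C := t * M ^ (t - 1))
    (s := Set.Icc 0 M)
    (fun x hx => (Real.hasDerivAt_rpow_const (Or.inr ht)).hasDerivWithinAt)
    (fun x hx => by
      have hx0 : 0 ≤ x := hx.1
      have hxM : x ≤ M := hx.2
      have h1 : x ^ (t - 1) ≤ M ^ (t - 1) := Real.rpow_le_rpow hx0 hxM (by linarith)
      have h2 : 0 ≤ x ^ (t - 1) := Real.rpow_nonneg hx0 _
      rw [Real.norm_eq_abs, abs_mul, abs_of_nonneg (by linarith : (0:ℝ) ≤ t),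
        abs_of_nonneg h2]
      exact mul_le_mul_of_nonneg_left h1 (by linarith)) (convex_Icc 0 M) hb ha
  simpa [Real.norm_eq_abs, abs_sub_comm] using this

lemma aux_holder (d : ℕ)
    (A : EuclideanSpace ℝ (Fin d) →L[ℝ] EuclideanSpace ℝ (Fin d))
    (t : ℝ) (ht : 0 ≤ t)
    (x y : EuclideanSpace ℝ (Fin d)) (hx : ‖x‖ = 1) (hy : ‖y‖ = 1) :
    |‖A x‖ ^ t - ‖A y‖ ^ t| ≤ (t + 1) * ‖A‖ ^ t * ‖x - y‖ ^ min 1 t := by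
  have hAn : 0 ≤ ‖A‖ := norm_nonneg _
  have hax : ‖A x‖ ≤ ‖A‖ := by
    have h := A.le_opNorm x
    rw [hx, mul_one] at h
    exact h
  have hay : ‖A y‖ ≤ ‖A‖ := by
    have h := A.le_opNorm y
    rw [hy, mul_one] at h
    exact h
  have hd : |‖A x‖ - ‖A y‖| ≤ ‖A‖ * ‖x - y‖ := by
    calc |‖A x‖ - ‖A y‖| ≤ ‖A x - A y‖ := abs_norm_sub_norm_le _ _
      _ = ‖A (x - y)‖ := by rw [map_sub]
      _ ≤ ‖A‖ * ‖x - y‖ := A.le_opNorm _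
  rcases le_total t 1 with h1 | h1
  · rw [min_eq_right h1]
    calc |‖A x‖ ^ t - ‖A y‖ ^ t| ≤ |‖A x‖ - ‖A y‖| ^ t :=
          abs_rpow_sub_rpow_le _ _ (norm_nonneg _) (norm_nonneg _) ht h1
      _ ≤ (‖A‖ * ‖x - y‖) ^ t :=
          Real.rpow_le_rpow (abs_nonneg _) hd ht
      _ = ‖A‖ ^ t * ‖x - y‖ ^ t := Real.mul_rpow hAn (norm_nonneg _)
      _ ≤ (t + 1) * (‖A‖ ^ t * ‖x - y‖ ^ t) := by
          have h0 : 0 ≤ ‖A‖ ^ t * ‖x - y‖ ^ t := by positivity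
          nlinarith
      _ = (t + 1) * ‖A‖ ^ t * ‖x - y‖ ^ t := by ring
  · rw [min_eq_left h1]
    rcases eq_or_lt_of_le hAn with hA0 | hA0
    · have hx0 : ‖A x‖ = 0 := le_antisymm (by rw [← hA0] at hax; exact hax) (norm_nonneg _)
      have hy0 : ‖A y‖ = 0 := le_antisymm (by rw [← hA0] at hay; exact hay) (norm_nonneg _)
      rw [hx0, hy0, sub_self, abs_zero]
      positivity
    · calc |‖A x‖ ^ t - ‖A y‖ ^ t| ≤ t * ‖A‖ ^ (t - 1) * |‖A x‖ - ‖A y‖| :=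
            rpow_lipschitz hAn h1 ⟨norm_nonneg _, hax⟩ ⟨norm_nonneg _, hay⟩
        _ ≤ t * ‖A‖ ^ (t - 1) * (‖A‖ * ‖x - y‖) := by
            apply mul_le_mul_of_nonneg_left hd
            positivity
        _ = t * (‖A‖ ^ (t - 1) * ‖A‖ ^ (1:ℝ)) * ‖x - y‖ := by
            rw [Real.rpow_one]; ring
        _ = t * ‖A‖ ^ t * ‖x - y‖ := by
            rw [← Real.rpow_add hA0]; ring_nf
        _ ≤ (t + 1) * ‖A‖ ^ t * ‖x - y‖ ^ (1:ℝ) := by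
            rw [Real.rpow_one]
            have : 0 ≤ ‖A‖ ^ t * ‖x - y‖ := by positivity
            nlinarith

theorem holder_estimate_weights (d : ℕ)
    (A : EuclideanSpace ℝ (Fin d) →L[ℝ] EuclideanSpace ℝ (Fin d))
    (hA : Function.Bijective A) (t : ℝ) (ht : 0 ≤ t)
    (u w : EuclideanSpace ℝ (Fin d)) (hu : u ≠ 0) (hw : w ≠ 0) :
    |‖A (‖u‖⁻¹ • u)‖ ^ t - ‖A (‖w‖⁻¹ • w)‖ ^ t| ≤
      (t + 1) * ‖A‖ ^ t * projDist u w ^ min 1 t := by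
  set x := ‖u‖⁻¹ • u with hxdef
  set y := ‖w‖⁻¹ • w with hydef
  have hu' : ‖u‖ ≠ 0 := norm_ne_zero_iff.mpr hu
  have hw' : ‖w‖ ≠ 0 := norm_ne_zero_iff.mpr hw
  have hx : ‖x‖ = 1 := by
    rw [hxdef, norm_smul, norm_inv, norm_norm, inv_mul_cancel₀ hu']
  have hy : ‖y‖ = 1 := by
    rw [hydef, norm_smul, norm_inv, norm_norm, inv_mul_cancel₀ hw']
  rcases min_cases ‖x - y‖ ‖x + y‖ with ⟨hmin, _⟩ | ⟨hmin, _⟩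
  · have := aux_holder d A t ht x y hx hy
    rw [projDist, hmin]
    exact this
  · have hy' : ‖(-y : EuclideanSpace ℝ (Fin d))‖ = 1 := by rw [norm_neg]; exact hy
    have := aux_holder d A t ht x (-y) hx hy'
    rw [projDist, hmin]
    rw [sub_neg_eq_add, map_neg, norm_neg] at this
    exact this
end

section
/- In the setting of the previous construction (each Aᵢ K-nonnegative, A = ∑Aᵢ K-irreducible, μ([x₀⋯x_{n−1}]) = ρ(A)^{-n}⟨A_{x₀}⋯A_{x_{n−1}}u, v⟩ with u ∈ int(K), v ∈ int(K*)), there exists C > 0 such that C^{-1}μ([x₀⋯x_{n−1}]) ≤ ρ(A)^{-n}‖A_{x₀}⋯A_{x_{n−1}}‖ ≤ Cμ([x₀⋯x_{n−1}]) for all words; i.e. μ is a 1-Gibbs state for 𝒜 with pressure log ρ(A). -/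
open scoped RealInnerProductSpace Pointwise

/-- The ordered product `A_{x₀} A_{x₁} ⋯ A_{x_{n-1}}`. -/
noncomputable def wprod {M d : ℕ}
    (A : Fin M → (EuclideanSpace ℝ (Fin d) →L[ℝ] EuclideanSpace ℝ (Fin d)))
    {n : ℕ} (x : Fin n → Fin M) :
    EuclideanSpace ℝ (Fin d) →L[ℝ] EuclideanSpace ℝ (Fin d) :=
  (List.ofFn fun i => A (x i)).prod

lemma wprod_succ {M d : ℕ}
    (A : Fin M → (EuclideanSpace ℝ (Fin d) →L[ℝ] EuclideanSpace ℝ (Fin d)))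
    {n : ℕ} (x : Fin (n + 1) → Fin M) :
    wprod A x = A (x 0) * wprod A (fun i => x i.succ) := by
  simp [wprod, List.ofFn_succ]

lemma wprod_mem {M d : ℕ} (K : Set (EuclideanSpace ℝ (Fin d)))
    (A : Fin M → (EuclideanSpace ℝ (Fin d) →L[ℝ] EuclideanSpace ℝ (Fin d)))
    (hA : ∀ i, ∀ x ∈ K, A i x ∈ K) :
    ∀ (n : ℕ) (x : Fin n → Fin M), ∀ y ∈ K, wprod A x y ∈ K := by
  intro n
  induction n with
  | zero => intro x y hy; simpa [wprod] using hy
  | succ n ih =>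
      intro x y hy
      rw [wprod_succ]
      exact hA _ _ (ih (fun i => x i.succ) y hy)

theorem cylinder_measure_gibbs_inequality {M d : ℕ}
    (K : Set (EuclideanSpace ℝ (Fin d)))
    (hclosed : IsClosed K) (hpointed : K ∩ (-K) = {0})
    (hsmulK : ∀ l : ℝ, 0 < l → l • K = K) (hconv : Convex ℝ K)
    (hint : (interior K).Nonempty)
    (A : Fin M → (EuclideanSpace ℝ (Fin d) →L[ℝ] EuclideanSpace ℝ (Fin d)))
    (hA : ∀ i, ∀ x ∈ K, A i x ∈ K)
    (hirr : ∀ x ∈ K, x ≠ 0 →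
      (∑ k ∈ Finset.range d, (∑ i, A i) ^ k) x ∈ interior K)
    (r : ℝ) (hr : 0 < r)
    (hrspec : spectralRadius ℝ (∑ i, A i) = ENNReal.ofReal r)
    (u v : EuclideanSpace ℝ (Fin d))
    (hu : (∑ i, A i) u = r • u)
    (hv : ContinuousLinearMap.adjoint (∑ i, A i) v = r • v)
    (huv : ⟪u, v⟫ = 1) (huK : u ∈ interior K)
    (hvK : v ∈ interior {w | ∀ x ∈ K, 0 ≤ ⟪x, w⟫}) :
    ∃ C > (0 : ℝ), ∀ (n : ℕ) (x : Fin n → Fin M),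
      C⁻¹ * ((r ^ n)⁻¹ * ⟪(wprod A x) u, v⟫) ≤ (r ^ n)⁻¹ * ‖wprod A x‖ ∧
      (r ^ n)⁻¹ * ‖wprod A x‖ ≤ C * ((r ^ n)⁻¹ * ⟪(wprod A x) u, v⟫) := by
  classical
  obtain ⟨ε, hε, hεb⟩ := Metric.mem_nhds_iff.mp (mem_interior_iff_mem_nhds.mp huK)
  obtain ⟨δ, hδ, hδb⟩ := Metric.mem_nhds_iff.mp (mem_interior_iff_mem_nhds.mp hvK)
  set e : ℝ := ε / 2 with he_def
  set dd : ℝ := δ / 2 with hdd_def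
  have he0 : 0 < e := by positivity
  have hdd0 : 0 < dd := by positivity
  have huKmem : u ∈ K := interior_subset huK
  -- Quantitative positivity of v on K.
  have hKv : ∀ y ∈ K, dd * ‖y‖ ≤ ⟪y, v⟫ := by
    intro y hy
    rcases eq_or_ne y 0 with rfl | hy0
    · simp
    · have hny : (0 : ℝ) < ‖y‖ := norm_pos_iff.mpr hy0
      have hw : v - (dd / ‖y‖) • y ∈ Metric.ball v δ := by
        rw [Metric.mem_ball, dist_eq_norm]
        have h1 : v - (dd / ‖y‖) • y - v = -((dd / ‖y‖) • y) := by abel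
        rw [h1, norm_neg, norm_smul, Real.norm_eq_abs,
          abs_of_pos (by positivity : (0:ℝ) < dd / ‖y‖)]
        rw [div_mul_cancel₀ _ (ne_of_gt hny)]
        linarith
      have h0 : (0 : ℝ) ≤ ⟪y, v - (dd / ‖y‖) • y⟫ := hδb hw y hy
      rw [inner_sub_right, real_inner_smul_right, real_inner_self_eq_norm_sq] at h0
      have : dd / ‖y‖ * ‖y‖ ^ 2 = dd * ‖y‖ := by
        field_simp
      linarith [h0, this ▸ h0]
  -- Key estimate for any K-nonnegative operator.
  set R : ℝ := ‖u‖ + e with hR_def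
  have hR0 : 0 < R := by positivity
  set C₂ : ℝ := e⁻¹ * dd⁻¹ * (R / e + 1) with hC2_def
  have hC2pos : 0 < C₂ := by positivity
  have key : ∀ B : EuclideanSpace ℝ (Fin d) →L[ℝ] EuclideanSpace ℝ (Fin d),
      (∀ y ∈ K, B y ∈ K) →
      ⟪B u, v⟫ ≤ ‖u‖ * ‖v‖ * ‖B‖ ∧ ‖B‖ ≤ C₂ * ⟪B u, v⟫ := by
    intro B hB
    set p : ℝ := ⟪B u, v⟫ with hp_def
    have hp0 : 0 ≤ p := le_trans (by positivity) (hKv _ (hB u huKmem))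
    constructor
    · calc p ≤ ‖B u‖ * ‖v‖ := real_inner_le_norm _ _
        _ ≤ ‖B‖ * ‖u‖ * ‖v‖ :=
          mul_le_mul_of_nonneg_right (B.le_opNorm u) (norm_nonneg v)
        _ = ‖u‖ * ‖v‖ * ‖B‖ := by ring
    · -- bound ‖B w‖ for unit w
      have hunit : ∀ w : EuclideanSpace ℝ (Fin d), ‖w‖ ≤ 1 → ‖B w‖ ≤ C₂ * p := by
        intro w hw
        set z : EuclideanSpace ℝ (Fin d) := u + e • w with hz_def
        have hzK : z ∈ K := by
          apply hεb
          rw [Metric.mem_ball, dist_eq_norm]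
          have : z - u = e • w := by rw [hz_def]; abel
          rw [this, norm_smul, Real.norm_eq_abs, abs_of_pos he0]
          calc e * ‖w‖ ≤ e * 1 := mul_le_mul_of_nonneg_left hw he0.le
            _ = e := mul_one e
            _ < ε := by rw [he_def]; linarith
        have hzn : ‖z‖ ≤ R := by
          calc ‖z‖ ≤ ‖u‖ + ‖e • w‖ := norm_add_le _ _
            _ ≤ ‖u‖ + e := by
                have : ‖e • w‖ = e * ‖w‖ := by
                  rw [norm_smul, Real.norm_eq_abs, abs_of_pos he0]
                rw [this]
                nlinarith
            _ = R := rfl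
        set t : ℝ := e / R with ht_def
        have ht0 : 0 < t := by positivity
        have htzK : u - t • z ∈ K := by
          apply hεb
          rw [Metric.mem_ball, dist_eq_norm]
          have h1 : u - t • z - u = -(t • z) := by abel
          rw [h1, norm_neg, norm_smul, Real.norm_eq_abs, abs_of_pos ht0]
          have h2 : t * ‖z‖ ≤ t * R := mul_le_mul_of_nonneg_left hzn ht0.le
          have htR : t * R = e := by rw [ht_def]; field_simp
          have h3 : e < ε := by rw [he_def]; linarith
          calc t * ‖z‖ ≤ t * R := h2
            _ = e := htR
            _ < ε := h3
        -- 0 ≤ ⟪B(u - t•z), v⟫ gives t * ⟪Bz,v⟫ ≤ p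
        have h1 : (0 : ℝ) ≤ ⟪B (u - t • z), v⟫ :=
          le_trans (by positivity) (hKv _ (hB _ htzK))
        have h1' : t * ⟪B z, v⟫ ≤ p := by
          rw [map_sub, map_smul, inner_sub_left, real_inner_smul_left] at h1
          linarith
        have h2 : dd * ‖B z‖ ≤ ⟪B z, v⟫ := hKv _ (hB _ hzK)
        have h3 : dd * ‖B u‖ ≤ p := hKv _ (hB _ huKmem)
        have hBz : ‖B z‖ ≤ dd⁻¹ * (t⁻¹ * p) := by
          have h4 : ⟪B z, v⟫ ≤ t⁻¹ * p := by
            rw [le_inv_mul_iff₀ ht0]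
            linarith
          rw [le_inv_mul_iff₀ hdd0]
          linarith
        have hBu : ‖B u‖ ≤ dd⁻¹ * p := by
          rw [le_inv_mul_iff₀ hdd0]; linarith
        have hBw : e * ‖B w‖ = ‖B z - B u‖ := by
          have : B z - B u = e • B w := by
            rw [hz_def, map_add, map_smul]; abel
          rw [this, norm_smul, Real.norm_eq_abs, abs_of_pos he0]
        have h5 : ‖B z - B u‖ ≤ ‖B z‖ + ‖B u‖ := norm_sub_le _ _
        have htinv : t⁻¹ = R / e := by
          rw [ht_def]; field_simp
        have : e * ‖B w‖ ≤ dd⁻¹ * (R / e + 1) * p := by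
          rw [hBw]
          calc ‖B z - B u‖ ≤ ‖B z‖ + ‖B u‖ := h5
            _ ≤ dd⁻¹ * (t⁻¹ * p) + dd⁻¹ * p := add_le_add hBz hBu
            _ = dd⁻¹ * (R / e + 1) * p := by rw [htinv]; ring
        calc ‖B w‖ = e⁻¹ * (e * ‖B w‖) := by field_simp
          _ ≤ e⁻¹ * (dd⁻¹ * (R / e + 1) * p) := by
              apply mul_le_mul_of_nonneg_left this (by positivity)
          _ = C₂ * p := by rw [hC2_def]; ring
      apply ContinuousLinearMap.opNorm_le_bound B (by positivity)
      intro w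
      rcases eq_or_ne w 0 with rfl | hw0
      · simp
      · have hnw : (0 : ℝ) < ‖w‖ := norm_pos_iff.mpr hw0
        have hu1 : ‖(‖w‖⁻¹ • w : EuclideanSpace ℝ (Fin d))‖ ≤ 1 := by
          rw [norm_smul, Real.norm_eq_abs, abs_of_pos (by positivity)]
          rw [inv_mul_cancel₀ (ne_of_gt hnw)]
        have := hunit _ hu1
        rw [map_smul, norm_smul, Real.norm_eq_abs, abs_of_pos (by positivity)] at this
        calc ‖B w‖ = ‖w‖ * (‖w‖⁻¹ * ‖B w‖) := by field_simp
          _ ≤ ‖w‖ * (C₂ * p) := mul_le_mul_of_nonneg_left this hnw.le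
          _ = C₂ * p * ‖w‖ := by ring
  -- Assemble.
  set C : ℝ := max (‖u‖ * ‖v‖) C₂ + 1 with hC_def
  have hC0 : 0 < C := by
    have : 0 ≤ max (‖u‖ * ‖v‖) C₂ := le_max_of_le_right hC2pos.le
    linarith
  refine ⟨C, hC0, fun n x => ?_⟩
  obtain ⟨hup, hlow⟩ := key (wprod A x) (wprod_mem K A hA n x)
  set B := wprod A x
  set p : ℝ := ⟪B u, v⟫ with hp_def
  have hp0 : 0 ≤ p := le_trans (by positivity) (hKv _ (wprod_mem K A hA n x u huKmem))
  have hs : (0 : ℝ) < (r ^ n)⁻¹ := by positivity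
  have hup' : p ≤ C * ‖B‖ := by
    have h1 : ‖u‖ * ‖v‖ * ‖B‖ ≤ C * ‖B‖ := by
      apply mul_le_mul_of_nonneg_right _ (norm_nonneg B)
      have := le_max_left (‖u‖ * ‖v‖) C₂
      linarith
    linarith
  have hlow' : ‖B‖ ≤ C * p := by
    have h1 : C₂ * p ≤ C * p := by
      apply mul_le_mul_of_nonneg_right _ hp0
      have := le_max_right (‖u‖ * ‖v‖) C₂
      linarith
    linarith
  constructor
  · have h : C⁻¹ * p ≤ ‖B‖ := by
      rw [inv_mul_le_iff₀ hC0]; linarith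
    calc C⁻¹ * ((r ^ n)⁻¹ * p) = (r ^ n)⁻¹ * (C⁻¹ * p) := by ring
      _ ≤ (r ^ n)⁻¹ * ‖B‖ := mul_le_mul_of_nonneg_left h hs.le
  · calc (r ^ n)⁻¹ * ‖B‖ ≤ (r ^ n)⁻¹ * (C * p) := mul_le_mul_of_nonneg_left hlow' hs.le
      _ = C * ((r ^ n)⁻¹ * p) := by ring
end

section
/- Suppose each Aᵢ preserves a closed cone K with nonempty interior and A = ∑ᵢAᵢ is K-primitive, so that ‖ρ(A)^{-n}Aⁿ − uvᵀ‖ ≤ Cβⁿ for some β ∈ (0,1), where u, v are the normalized right/left Perron eigenvectors. Then for the measure μ([x₀⋯x_{n−1}]) = ρ(A)^{-n}⟨A_{x₀}⋯A_{x_{n−1}}u, v⟩ there is a constant K′ such that ∑_{I,J} |μ([I] ∩ σ^{-t}[{}_t J])−μ([I])μ([J])| ≤ K′β^{t−s} for all s ≤ t, where the sum is over all words I of length s and J of any fixed length r, and [{}_t J] denotes the cylinder fixing coordinates t,…,t+r−1 to spell J. In particular μ is weak Bernoulli. -/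
open scoped RealInnerProductSpace Pointwise

/-- The value `μ([x₀⋯x_{n-1}]) = ρ(A)^{-n} ⟨A_{x₀}⋯A_{x_{n-1}} u, v⟩` of the
matrix Gibbs state on a cylinder. -/
noncomputable def cylMeas {M d : ℕ}
    (A : Fin M → (EuclideanSpace ℝ (Fin d) →L[ℝ] EuclideanSpace ℝ (Fin d)))
    (r : ℝ) (u v : EuclideanSpace ℝ (Fin d)) {n : ℕ} (x : Fin n → Fin M) : ℝ :=
  (r ^ n)⁻¹ * ⟪(wprod A x) u, v⟫

lemma wprod_append {M d : ℕ}
    (A : Fin M → (EuclideanSpace ℝ (Fin d) →L[ℝ] EuclideanSpace ℝ (Fin d)))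
    {m n : ℕ} (y : Fin m → Fin M) (z : Fin n → Fin M) :
    wprod A (Fin.append y z) = wprod A y * wprod A z := by
  unfold wprod
  rw [show (fun i => A (Fin.append y z i)) = Fin.append (fun i => A (y i)) (fun i => A (z i)) by
    funext i; refine Fin.addCases (fun i => ?_) (fun i => ?_) i <;>
      simp [Fin.append_left, Fin.append_right]]
  rw [List.ofFn_fin_append, List.prod_append]

lemma wprod_cons {M d : ℕ}
    (A : Fin M → (EuclideanSpace ℝ (Fin d) →L[ℝ] EuclideanSpace ℝ (Fin d)))
    {n : ℕ} (a : Fin M) (x : Fin n → Fin M) :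
    wprod A (Fin.cons a x) = A a * wprod A x := by
  unfold wprod
  rw [List.ofFn_succ, List.prod_cons]
  simp

lemma sum_wprod {M d : ℕ}
    (A : Fin M → (EuclideanSpace ℝ (Fin d) →L[ℝ] EuclideanSpace ℝ (Fin d)))
    (n : ℕ) : ∑ x : Fin n → Fin M, wprod A x = (∑ i, A i) ^ n := by
  induction n with
  | zero =>
    rw [pow_zero]
    have h1 : ∀ x : Fin 0 → Fin M, wprod A x = 1 := fun x => by simp [wprod]
    simp [h1]
  | succ n ih =>
    rw [pow_succ', ← ih, Finset.mul_sum]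
    simp_rw [Finset.sum_mul]
    rw [← (Fin.consEquiv fun _ => Fin M).sum_comp (fun x => wprod A x),
      Fintype.sum_prod_type]
    rw [Finset.sum_comm]
    refine Finset.sum_congr rfl fun x _ => Finset.sum_congr rfl fun a _ => ?_
    exact wprod_cons A a x

lemma list_prod_mem_cone {d : ℕ} (K : Set (EuclideanSpace ℝ (Fin d)))
    (l : List (EuclideanSpace ℝ (Fin d) →L[ℝ] EuclideanSpace ℝ (Fin d)))
    (h : ∀ B ∈ l, ∀ x ∈ K, B x ∈ K) : ∀ x ∈ K, l.prod x ∈ K := by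
  induction l with
  | nil => intro x hx; simpa using hx
  | cons B l ih =>
    intro x hx
    rw [List.prod_cons, ContinuousLinearMap.mul_apply]
    exact h B (by simp) _ (ih (fun B' hB' => h B' (by simp [hB'])) x hx)

lemma wprod_mem_cone {M d : ℕ} (K : Set (EuclideanSpace ℝ (Fin d)))
    (A : Fin M → (EuclideanSpace ℝ (Fin d) →L[ℝ] EuclideanSpace ℝ (Fin d)))
    (hA : ∀ i, ∀ x ∈ K, A i x ∈ K) {n : ℕ} (w : Fin n → Fin M) :
    ∀ x ∈ K, wprod A w x ∈ K := by
  refine list_prod_mem_cone K _ (fun B hB x hx => ?_)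
  obtain ⟨i, rfl⟩ := List.mem_ofFn.1 hB
  exact hA _ x hx

lemma opnorm_le_of_cone {d : ℕ} (K : Set (EuclideanSpace ℝ (Fin d)))
    (u v : EuclideanSpace ℝ (Fin d)) (huK : u ∈ interior K)
    (hvK : v ∈ interior {w | ∀ x ∈ K, 0 ≤ ⟪x, w⟫}) :
    ∃ c > (0:ℝ), ∀ B : EuclideanSpace ℝ (Fin d) →L[ℝ] EuclideanSpace ℝ (Fin d),
      (∀ x ∈ K, B x ∈ K) → 0 ≤ ⟪B u, v⟫ ∧ ‖B‖ ≤ c * ⟪B u, v⟫ := by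
  obtain ⟨δ₀, hδ₀, hball⟩ := Metric.mem_nhds_iff.1 (mem_interior_iff_mem_nhds.1 huK)
  obtain ⟨ε₀, hε₀, hballv⟩ := Metric.mem_nhds_iff.1 (mem_interior_iff_mem_nhds.1 hvK)
  set δ := δ₀ / 2 with hδdef
  set ε := ε₀ / 2 with hεdef
  have hδ : 0 < δ := by positivity
  have hε : 0 < ε := by positivity
  have hvdual : ∀ x ∈ K, 0 ≤ ⟪x, v⟫ := hballv (Metric.mem_ball_self hε₀)
  have hlow : ∀ x ∈ K, ε * ‖x‖ ≤ ⟪x, v⟫ := by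
    intro x hx
    rcases eq_or_ne x 0 with rfl | hx0
    · simp
    · have hxn : (0:ℝ) < ‖x‖ := norm_pos_iff.2 hx0
      have hw : v - (ε * ‖x‖⁻¹) • x ∈ {w | ∀ x ∈ K, 0 ≤ ⟪x, w⟫} := by
        apply hballv
        rw [Metric.mem_ball, dist_eq_norm]
        have heq : ‖v - (ε * ‖x‖⁻¹) • x - v‖ = ε := by
          rw [sub_sub_cancel_left, norm_neg, norm_smul, Real.norm_eq_abs,
            abs_of_pos (by positivity), mul_assoc, inv_mul_cancel₀ (ne_of_gt hxn), mul_one]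
        rw [heq, hεdef]; linarith
      have h0 := hw x hx
      rw [inner_sub_right, real_inner_smul_right, real_inner_self_eq_norm_sq] at h0
      have h2 : ε * ‖x‖⁻¹ * (‖x‖ * ‖x‖) = ε * ‖x‖ := by
        field_simp
      rw [sq] at h0
      linarith [h0, h2.symm.le, h2.le]
  have hlow' : ∀ x ∈ K, ‖x‖ ≤ ε⁻¹ * ⟪x, v⟫ := by
    intro x hx
    have h := hlow x hx
    have hε' : (0:ℝ) < ε⁻¹ := by positivity
    calc ‖x‖ = ε⁻¹ * (ε * ‖x‖) := by field_simp
    _ ≤ ε⁻¹ * ⟪x, v⟫ := mul_le_mul_of_nonneg_left h hε'.le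
  have hmem : ∀ x : EuclideanSpace ℝ (Fin d), ‖x‖ ≤ 1 → u + δ • x ∈ K := by
    intro x hx
    apply hball
    rw [Metric.mem_ball, dist_eq_norm, add_sub_cancel_left, norm_smul, Real.norm_eq_abs,
      abs_of_pos hδ]
    calc δ * ‖x‖ ≤ δ * 1 := by nlinarith
    _ < δ₀ := by rw [mul_one, hδdef]; linarith
  have huKmem : u ∈ K := interior_subset huK
  refine ⟨3 / (δ * ε), by positivity, fun B hB => ?_⟩
  have hBu : B u ∈ K := hB u huKmem
  have hBuv : 0 ≤ ⟪B u, v⟫ := hvdual _ hBu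
  refine ⟨hBuv, ?_⟩
  have hkey : ∀ x : EuclideanSpace ℝ (Fin d), ‖x‖ = 1 → ‖B x‖ ≤ 3 / (δ * ε) * ⟪B u, v⟫ := by
    intro x hx
    have hp : u + δ • x ∈ K := hmem x (le_of_eq hx)
    have hm : u + δ • (-x) ∈ K := hmem (-x) (by rw [norm_neg, hx])
    have hip : ⟪B (u + δ • x), v⟫ = ⟪B u, v⟫ + δ * ⟪B x, v⟫ := by
      rw [map_add, map_smul, inner_add_left, real_inner_smul_left]
    have him : ⟪B (u + δ • (-x)), v⟫ = ⟪B u, v⟫ - δ * ⟪B x, v⟫ := by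
      rw [map_add, map_smul, inner_add_left, real_inner_smul_left, map_neg,
        inner_neg_left]; ring
    have h1 : 0 ≤ ⟪B u, v⟫ + δ * ⟪B x, v⟫ := hip ▸ hvdual _ (hB _ hp)
    have h2 : 0 ≤ ⟪B u, v⟫ - δ * ⟪B x, v⟫ := him ▸ hvdual _ (hB _ hm)
    have hd1 : δ * ⟪B x, v⟫ ≤ ⟪B u, v⟫ := by linarith
    have hup : ‖B (u + δ • x)‖ ≤ ε⁻¹ * (2 * ⟪B u, v⟫) := by
      refine le_trans (hlow' _ (hB _ hp)) ?_
      rw [hip]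
      have : ⟪B u, v⟫ + δ * ⟪B x, v⟫ ≤ 2 * ⟪B u, v⟫ := by linarith
      exact mul_le_mul_of_nonneg_left this (by positivity)
    have hBun : ‖B u‖ ≤ ε⁻¹ * ⟪B u, v⟫ := hlow' _ hBu
    have hBx : B x = δ⁻¹ • (B (u + δ • x) - B u) := by
      rw [map_add, map_smul, add_sub_cancel_left, smul_smul,
        inv_mul_cancel₀ (ne_of_gt hδ), one_smul]
    have hδinv : (0:ℝ) < δ⁻¹ := by positivity
    have hstep : ‖B x‖ ≤ δ⁻¹ * (‖B (u + δ • x)‖ + ‖B u‖) := by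
      rw [hBx, norm_smul, Real.norm_eq_abs, abs_of_pos hδinv]
      exact mul_le_mul_of_nonneg_left (norm_sub_le _ _) hδinv.le
    calc ‖B x‖ ≤ δ⁻¹ * (‖B (u + δ • x)‖ + ‖B u‖) := hstep
      _ ≤ δ⁻¹ * (ε⁻¹ * (2 * ⟪B u, v⟫) + ε⁻¹ * ⟪B u, v⟫) := by
          refine mul_le_mul_of_nonneg_left (add_le_add hup hBun) hδinv.le
      _ = 3 / (δ * ε) * ⟪B u, v⟫ := by field_simp; ring
  exact ContinuousLinearMap.opNorm_le_of_unit_norm (by positivity) hkey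

theorem primitive_weak_bernoulli_sum_bound {M d : ℕ}
    (K : Set (EuclideanSpace ℝ (Fin d)))
    (hclosed : IsClosed K) (hpointed : K ∩ (-K) = {0})
    (hsmulK : ∀ l : ℝ, 0 < l → l • K = K) (hconv : Convex ℝ K)
    (hint : (interior K).Nonempty)
    (A : Fin M → (EuclideanSpace ℝ (Fin d) →L[ℝ] EuclideanSpace ℝ (Fin d)))
    (hA : ∀ i, ∀ x ∈ K, A i x ∈ K)
    (r : ℝ) (hr : 0 < r)
    (hrspec : spectralRadius ℝ (∑ i, A i) = ENNReal.ofReal r)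
    (u v : EuclideanSpace ℝ (Fin d))
    (hu : (∑ i, A i) u = r • u)
    (hv : ContinuousLinearMap.adjoint (∑ i, A i) v = r • v)
    (huv : ⟪u, v⟫ = 1) (huK : u ∈ interior K)
    (hvK : v ∈ interior {w | ∀ x ∈ K, 0 ≤ ⟪x, w⟫})
    (Pm : EuclideanSpace ℝ (Fin d) →L[ℝ] EuclideanSpace ℝ (Fin d))
    (hPm : ∀ x, Pm x = ⟪v, x⟫ • u)
    (C β : ℝ) (hC : 0 < C) (hβ0 : 0 < β) (hβ1 : β < 1)
    (hconvg : ∀ n : ℕ, ‖(r ^ n)⁻¹ • (∑ i, A i) ^ n - Pm‖ ≤ C * β ^ n) :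
    ∃ K' > (0 : ℝ), ∀ (s rl t : ℕ), s ≤ t →
      (∑ I : Fin s → Fin M, ∑ J : Fin rl → Fin M,
        |(∑ Kw : Fin (t - s) → Fin M,
            cylMeas A r u v (Fin.append (Fin.append I Kw) J)) -
          cylMeas A r u v I * cylMeas A r u v J|) ≤ K' * β ^ (t - s) := by
  obtain ⟨c, hc, hcone⟩ := opnorm_le_of_cone K u v huK hvK
  set S := ∑ i, A i with hS
  have hu0 : (0:ℝ) < ‖u‖ := by
    rcases eq_or_ne u 0 with rfl | h
    · simp at huv
    · exact norm_pos_iff.2 h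
  have hv0 : (0:ℝ) < ‖v‖ := by
    rcases eq_or_ne v 0 with rfl | h
    · rw [inner_zero_right] at huv; simp at huv
    · exact norm_pos_iff.2 h
  have hpowu : ∀ n : ℕ, (S ^ n) u = (r ^ n) • u := by
    intro n
    induction n with
    | zero => simp
    | succ n ih =>
      rw [pow_succ, ContinuousLinearMap.mul_apply, hu, map_smul, ih, smul_smul, pow_succ, mul_comm]
  have hsum : ∀ n : ℕ, ∑ I : Fin n → Fin M, ‖wprod A I‖ ≤ c * r ^ n := by
    intro n
    calc ∑ I : Fin n → Fin M, ‖wprod A I‖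
        ≤ ∑ I : Fin n → Fin M, c * ⟪wprod A I u, v⟫ :=
          Finset.sum_le_sum fun I _ => (hcone _ (wprod_mem_cone K A hA I)).2
      _ = c * ⟪(∑ I : Fin n → Fin M, wprod A I) u, v⟫ := by
          rw [← Finset.mul_sum, ContinuousLinearMap.sum_apply, sum_inner]
      _ = c * r ^ n := by rw [sum_wprod, hpowu, real_inner_smul_left, huv, mul_one]
  have hsum' : ∀ n : ℕ, ∑ I : Fin n → Fin M, (r ^ n)⁻¹ * ‖wprod A I‖ ≤ c := by
    intro n
    rw [← Finset.mul_sum]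
    have hrn : (0:ℝ) < r ^ n := pow_pos hr n
    calc (r ^ n)⁻¹ * ∑ I : Fin n → Fin M, ‖wprod A I‖
        ≤ (r ^ n)⁻¹ * (c * r ^ n) := mul_le_mul_of_nonneg_left (hsum n) (by positivity)
      _ = c := by field_simp
  refine ⟨c * c * C * (‖u‖ * ‖v‖), by positivity, fun s rl t hst => ?_⟩
  set m := t - s with hm
  set D := (r ^ m)⁻¹ • S ^ m - Pm with hD
  have hrs : (0:ℝ) < (r ^ s)⁻¹ := by positivity
  have hrr : (0:ℝ) < (r ^ rl)⁻¹ := by positivity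
  have hkey : ∀ (I : Fin s → Fin M) (J : Fin rl → Fin M),
      (∑ Kw : Fin m → Fin M, cylMeas A r u v (Fin.append (Fin.append I Kw) J)) -
        cylMeas A r u v I * cylMeas A r u v J
      = (r ^ s)⁻¹ * (r ^ rl)⁻¹ * ⟪wprod A I (D (wprod A J u)), v⟫ := by
    intro I J
    unfold cylMeas
    simp_rw [wprod_append]
    have hL : ∑ Kw : Fin m → Fin M,
        (r ^ (s + m + rl))⁻¹ * ⟪((wprod A I * wprod A Kw) * wprod A J) u, v⟫
        = (r ^ (s + m + rl))⁻¹ * ⟪wprod A I ((S ^ m) (wprod A J u)), v⟫ := by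
      rw [← Finset.mul_sum]
      congr 1
      simp_rw [ContinuousLinearMap.mul_apply]
      rw [← sum_inner, ← map_sum]
      congr 2
      rw [← sum_wprod, ContinuousLinearMap.sum_apply]
    rw [hL]
    have hDapp : D (wprod A J u) = (r ^ m)⁻¹ • ((S ^ m) (wprod A J u)) -
        ⟪v, wprod A J u⟫ • u := by
      rw [hD, ContinuousLinearMap.sub_apply, ContinuousLinearMap.smul_apply, hPm]
    rw [hDapp, map_sub, map_smul, map_smul, inner_sub_left, real_inner_smul_left,
      real_inner_smul_left, real_inner_comm v (wprod A J u)]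
    rw [pow_add, pow_add, mul_inv, mul_inv]
    ring
  have hb : ∀ (I : Fin s → Fin M) (J : Fin rl → Fin M),
      |(∑ Kw : Fin m → Fin M, cylMeas A r u v (Fin.append (Fin.append I Kw) J)) -
        cylMeas A r u v I * cylMeas A r u v J|
      ≤ ((r ^ s)⁻¹ * ‖wprod A I‖) * (((r ^ rl)⁻¹ * ‖wprod A J‖) *
          (C * β ^ m * (‖u‖ * ‖v‖))) := by
    intro I J
    rw [hkey I J, abs_mul, abs_mul, abs_of_pos hrs, abs_of_pos hrr]
    have h1 : |⟪wprod A I (D (wprod A J u)), v⟫| ≤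
        ‖wprod A I‖ * (C * β ^ m * (‖wprod A J u‖)) * ‖v‖ := by
      calc |⟪wprod A I (D (wprod A J u)), v⟫|
          ≤ ‖wprod A I (D (wprod A J u))‖ * ‖v‖ := abs_real_inner_le_norm _ _
        _ ≤ (‖wprod A I‖ * ‖D (wprod A J u)‖) * ‖v‖ := by
            gcongr; exact (wprod A I).le_opNorm _
        _ ≤ ‖wprod A I‖ * (C * β ^ m * ‖wprod A J u‖) * ‖v‖ := by
            gcongr
            calc ‖D (wprod A J u)‖ ≤ ‖D‖ * ‖wprod A J u‖ := D.le_opNorm _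
              _ ≤ (C * β ^ m) * ‖wprod A J u‖ :=
                  mul_le_mul_of_nonneg_right (hconvg m) (norm_nonneg _)
    have h2 : ‖wprod A J u‖ ≤ ‖wprod A J‖ * ‖u‖ := (wprod A J).le_opNorm _
    have h3 : |⟪wprod A I (D (wprod A J u)), v⟫| ≤
        ‖wprod A I‖ * (C * β ^ m * (‖wprod A J‖ * ‖u‖)) * ‖v‖ := by
      refine le_trans h1 ?_
      gcongr
    calc (r ^ s)⁻¹ * (r ^ rl)⁻¹ * |⟪wprod A I (D (wprod A J u)), v⟫|
        ≤ (r ^ s)⁻¹ * (r ^ rl)⁻¹ *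
            (‖wprod A I‖ * (C * β ^ m * (‖wprod A J‖ * ‖u‖)) * ‖v‖) := by gcongr
      _ = ((r ^ s)⁻¹ * ‖wprod A I‖) * (((r ^ rl)⁻¹ * ‖wprod A J‖) *
            (C * β ^ m * (‖u‖ * ‖v‖))) := by ring
  calc (∑ I : Fin s → Fin M, ∑ J : Fin rl → Fin M,
        |(∑ Kw : Fin m → Fin M, cylMeas A r u v (Fin.append (Fin.append I Kw) J)) -
          cylMeas A r u v I * cylMeas A r u v J|)
      ≤ ∑ I : Fin s → Fin M, ∑ J : Fin rl → Fin M,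
          ((r ^ s)⁻¹ * ‖wprod A I‖) * (((r ^ rl)⁻¹ * ‖wprod A J‖) *
            (C * β ^ m * (‖u‖ * ‖v‖))) :=
        Finset.sum_le_sum fun I _ => Finset.sum_le_sum fun J _ => hb I J
    _ = (∑ I : Fin s → Fin M, (r ^ s)⁻¹ * ‖wprod A I‖) *
          ((∑ J : Fin rl → Fin M, (r ^ rl)⁻¹ * ‖wprod A J‖) *
            (C * β ^ m * (‖u‖ * ‖v‖))) := by
        rw [Finset.sum_mul]
        refine Finset.sum_congr rfl fun I _ => ?_
        rw [Finset.sum_mul, ← Finset.mul_sum]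
    _ ≤ c * (c * (C * β ^ m * (‖u‖ * ‖v‖))) := by
        have h1 := hsum' s
        have h2 := hsum' rl
        have hnn : (0:ℝ) ≤ ∑ I : Fin s → Fin M, (r ^ s)⁻¹ * ‖wprod A I‖ :=
          Finset.sum_nonneg fun I _ => by positivity
        have hnn2 : (0:ℝ) ≤ ∑ J : Fin rl → Fin M, (r ^ rl)⁻¹ * ‖wprod A J‖ :=
          Finset.sum_nonneg fun J _ => by positivity
        have hcc : (0:ℝ) ≤ C * β ^ m * (‖u‖ * ‖v‖) := by positivity
        calc _ ≤ c * ((∑ J : Fin rl → Fin M, (r ^ rl)⁻¹ * ‖wprod A J‖) *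
              (C * β ^ m * (‖u‖ * ‖v‖))) :=
            mul_le_mul_of_nonneg_right h1 (mul_nonneg hnn2 hcc)
          _ ≤ c * (c * (C * β ^ m * (‖u‖ * ‖v‖))) :=
            mul_le_mul_of_nonneg_left (mul_le_mul_of_nonneg_right h2 hcc) hc.le
    _ = c * c * C * (‖u‖ * ‖v‖) * β ^ m := by ring
end
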